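/- The functions R_b(t,x) = R_0 e^{2t} cosh(2x), W_b(x) = W_1 + W_0 arctan(e^{2x}), q_b = q_0 (constant) satisfy the system: R_tt − R_xx = 0; W_tt − W_xx + (R_t/R)W_t − (R_x/R)W_x + ((q_t² − q_x²)/2)e^{−4W} = 0; and q_tt − q_xx + (R_t/R)q_t − (R_x/R)q_x − 4q_t W_t + 4q_x W_x = 0. -/
import Mathlib

open Real MeasureTheory Filter

noncomputable def pt (u : ℝ → ℝ → ℝ) : ℝ → ℝ → ℝ := fun t x => deriv (fun s => u s x) t
noncomputable def px (u : ℝ → ℝ → ℝ) : ℝ → ℝ → ℝ := fun t x => deriv (fun y => u t y) x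

lemma hdexp (c x : ℝ) : HasDerivAt (fun y : ℝ => Real.exp (c * y)) (c * Real.exp (c * x)) x := by
  have h1 : HasDerivAt (fun y : ℝ => c * y) c x := by
    simpa using (hasDerivAt_id x).const_mul c
  simpa [mul_comm] using h1.exp

lemma hdcosh (x : ℝ) : HasDerivAt (fun y : ℝ => Real.cosh (2 * y)) (2 * Real.sinh (2 * x)) x := by
  have h1 : HasDerivAt (fun y : ℝ => 2 * y) 2 x := by
    simpa using (hasDerivAt_id x).const_mul 2
  simpa [mul_comm] using h1.cosh

lemma hdsinh (x : ℝ) : HasDerivAt (fun y : ℝ => Real.sinh (2 * y)) (2 * Real.cosh (2 * x)) x := by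
  have h1 : HasDerivAt (fun y : ℝ => 2 * y) 2 x := by
    simpa using (hasDerivAt_id x).const_mul 2
  simpa [mul_comm] using h1.sinh

noncomputable def w' (W₀ x : ℝ) : ℝ := W₀ * (2 * Real.exp (2 * x) / (1 + Real.exp (2 * x) ^ 2))

lemma hdW (W₀ W₁ x : ℝ) :
    HasDerivAt (fun y : ℝ => W₁ + W₀ * Real.arctan (Real.exp (2 * y))) (w' W₀ x) x := by
  have h2 := hdexp 2 x
  have h3 := (Real.hasDerivAt_arctan (Real.exp (2 * x))).comp x h2
  have h4 := (h3.const_mul W₀).const_add W₁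
  simpa [w', div_eq_mul_inv, mul_comm] using h4

lemma hdenom (x : ℝ) : (1 : ℝ) + Real.exp (2 * x) ^ 2 ≠ 0 := by positivity

lemma hdW2 (W₀ x : ℝ) :
    HasDerivAt (fun y : ℝ => w' W₀ y)
      (W₀ * ((2 * (2 * Real.exp (2 * x)) * (1 + Real.exp (2 * x) ^ 2)
        - 2 * Real.exp (2 * x) * (2 * Real.exp (2 * x) ^ (2-1) * (2 * Real.exp (2 * x))))
        / (1 + Real.exp (2 * x) ^ 2) ^ 2)) x := by
  have hn : HasDerivAt (fun y : ℝ => 2 * Real.exp (2 * y)) (2 * (2 * Real.exp (2 * x))) x :=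
    (hdexp 2 x).const_mul 2
  have hd : HasDerivAt (fun y : ℝ => 1 + Real.exp (2 * y) ^ 2)
      (2 * Real.exp (2 * x) ^ (2-1) * (2 * Real.exp (2 * x))) x :=
    ((hdexp 2 x).pow 2).const_add 1
  exact ((hn.div hd (hdenom x)).const_mul W₀)

/-- the polarized double-cusp background is an exact solution of
the reduced Einstein (wave map) system. -/
theorem statement3 (R₀ W₀ W₁ q₀ : ℝ) (hR₀ : 0 < R₀)
    (Rb Wb qb : ℝ → ℝ → ℝ)
    (hRb : Rb = fun t x => R₀ * Real.exp (2 * t) * Real.cosh (2 * x))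
    (hWb : Wb = fun _ x => W₁ + W₀ * Real.arctan (Real.exp (2 * x)))
    (hqb : qb = fun _ _ => q₀) :
    (∀ t x, pt (pt Rb) t x - px (px Rb) t x = 0) ∧
    (∀ t x, pt (pt Wb) t x - px (px Wb) t x
        + (pt Rb t x / Rb t x) * pt Wb t x - (px Rb t x / Rb t x) * px Wb t x
        + ((pt qb t x) ^ 2 - (px qb t x) ^ 2) / 2 * Real.exp (-(4 * Wb t x)) = 0) ∧
    (∀ t x, pt (pt qb) t x - px (px qb) t x
        + (pt Rb t x / Rb t x) * pt qb t x - (px Rb t x / Rb t x) * px qb t x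
        - 4 * pt qb t x * pt Wb t x + 4 * px qb t x * px Wb t x = 0) := by
  subst hRb hWb hqb
  -- basic first derivatives
  have hRt : ∀ t x : ℝ, pt (fun t x => R₀ * Real.exp (2 * t) * Real.cosh (2 * x)) t x
      = R₀ * (2 * Real.exp (2 * t)) * Real.cosh (2 * x) := by
    intro t x
    exact (((hdexp 2 t).const_mul R₀).mul_const (Real.cosh (2 * x))).deriv
  have hRx : ∀ t x : ℝ, px (fun t x => R₀ * Real.exp (2 * t) * Real.cosh (2 * x)) t x
      = R₀ * Real.exp (2 * t) * (2 * Real.sinh (2 * x)) := by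
    intro t x
    exact ((hdcosh x).const_mul (R₀ * Real.exp (2 * t))).deriv
  have hWt : ∀ t x : ℝ, pt (fun _ x => W₁ + W₀ * Real.arctan (Real.exp (2 * x))) t x = 0 := by
    intro t x; simp [pt]
  have hWx : ∀ t x : ℝ, px (fun _ x => W₁ + W₀ * Real.arctan (Real.exp (2 * x))) t x
      = w' W₀ x := by
    intro t x; exact (hdW W₀ W₁ x).deriv
  have hqt : ∀ t x : ℝ, pt (fun _ _ : ℝ => q₀) t x = 0 := by intro t x; simp [pt]
  have hqx : ∀ t x : ℝ, px (fun _ _ : ℝ => q₀) t x = 0 := by intro t x; simp [px]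
  refine ⟨?_, ?_, ?_⟩
  · intro t x
    have h1 : pt (pt fun t x => R₀ * Real.exp (2 * t) * Real.cosh (2 * x)) t x
        = R₀ * (2 * (2 * Real.exp (2 * t))) * Real.cosh (2 * x) := by
      have : (fun s => pt (fun t x => R₀ * Real.exp (2 * t) * Real.cosh (2 * x)) s x)
          = fun s => R₀ * 2 * Real.exp (2 * s) * Real.cosh (2 * x) := by
        funext s; rw [hRt s x]; ring
      rw [pt, this]
      have := (((hdexp 2 t).const_mul (R₀ * 2)).mul_const (Real.cosh (2 * x))).deriv
      rw [this]; ring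
    have h2 : px (px fun t x => R₀ * Real.exp (2 * t) * Real.cosh (2 * x)) t x
        = R₀ * Real.exp (2 * t) * (2 * (2 * Real.cosh (2 * x))) := by
      have : (fun y => px (fun t x => R₀ * Real.exp (2 * t) * Real.cosh (2 * x)) t y)
          = fun y => R₀ * Real.exp (2 * t) * 2 * Real.sinh (2 * y) := by
        funext y; rw [hRx t y]; ring
      rw [px, this]
      have := ((hdsinh x).const_mul (R₀ * Real.exp (2 * t) * 2)).deriv
      rw [this]; ring
    rw [h1, h2]; ring
  · intro t x
    have hWtt : pt (pt fun _ x => W₁ + W₀ * Real.arctan (Real.exp (2 * x))) t x = 0 := by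
      have : (fun s => pt (fun _ x => W₁ + W₀ * Real.arctan (Real.exp (2 * x))) s x)
          = fun _ => (0 : ℝ) := by funext s; exact hWt s x
      rw [pt, this, deriv_const]
    have hWxx : px (px fun _ x => W₁ + W₀ * Real.arctan (Real.exp (2 * x))) t x
        = W₀ * ((2 * (2 * Real.exp (2 * x)) * (1 + Real.exp (2 * x) ^ 2)
          - 2 * Real.exp (2 * x) * (2 * Real.exp (2 * x) ^ (2-1) * (2 * Real.exp (2 * x))))
          / (1 + Real.exp (2 * x) ^ 2) ^ 2) := by
      have : (fun y => px (fun _ x => W₁ + W₀ * Real.arctan (Real.exp (2 * x))) t y)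
          = fun y => w' W₀ y := by funext y; exact hWx t y
      rw [px, this]; exact (hdW2 W₀ x).deriv
    rw [hWtt, hWxx, hWt, hWx, hRt, hRx, hqt, hqx]
    have hE : Real.exp (2 * x) ≠ 0 := Real.exp_ne_zero _
    have hE2 : Real.exp (2 * t) ≠ 0 := Real.exp_ne_zero _
    have hC : Real.cosh (2 * x) ≠ 0 := (Real.cosh_pos (2 * x)).ne'
    simp only [Real.sinh_eq, Real.cosh_eq, Real.exp_neg, w']
    field_simp
    ring
  · intro t x
    have hqtt : pt (pt fun _ _ : ℝ => q₀) t x = 0 := by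
      have : (fun s => pt (fun _ _ : ℝ => q₀) s x) = fun _ => (0 : ℝ) := by
        funext s; exact hqt s x
      rw [pt, this, deriv_const]
    have hqxx : px (px fun _ _ : ℝ => q₀) t x = 0 := by
      have : (fun y => px (fun _ _ : ℝ => q₀) t y) = fun _ => (0 : ℝ) := by
        funext y; exact hqx t y
      rw [px, this, deriv_const]
    rw [hqtt, hqxx, hqt, hqx]; ring
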